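/- Suppose f : ℤ × ℤ → ℂ satisfies, for all m, n, t ∈ ℤ, (t + m)·f(m,t) − t·f(m, n+t) = m·f(m+n, t). Then there exists d ∈ ℂ such that f(m, n) = f(0,0) whenever m + n ≠ 0, and f(m, −m) = d·m + f(0,0) for all m ∈ ℤ. -/

import Mathlib

/-- Structural step of Case I.3.3 (`b = 0`, `a = 0`) of Theorem 3.5. -/
theorem stmt_7 (f : ℤ × ℤ → ℂ)
    (hf : ∀ m n t : ℤ,
      (t + m) * f (m, t) - t * f (m, n + t) = m * f (m + n, t)) :
    ∃ d : ℂ,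
      (∀ m n : ℤ, m + n ≠ 0 → f (m, n) = f (0, 0)) ∧
      (∀ m : ℤ, f (m, -m) = d * m + f (0, 0)) := by
  set c := f (0, 0) with hc
  -- f (0, t) = c
  have h0t : ∀ t : ℤ, f (0, t) = c := by
    intro t
    rcases eq_or_ne t 0 with rfl | ht
    · rfl
    · have h := hf 0 (-t) t
      simp only [show (-t) + t = (0 : ℤ) by ring, add_zero, Int.cast_zero, zero_mul,
        zero_add] at h
      have ht' : (t : ℂ) ≠ 0 := Int.cast_ne_zero.mpr ht
      have := sub_eq_zero.mp h
      exact mul_left_cancel₀ ht' (by rw [this])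
  -- key identity: (t+m) f(m,t) = t f(m,-m) + m f(-t,t)
  have hC : ∀ m t : ℤ, ((t : ℂ) + m) * f (m, t) = t * f (m, -m) + m * f (-t, t) := by
    intro m t
    have h := hf m (-m - t) t
    simp only [show (-m - t) + t = -m by ring, show m + (-m - t) = -t by ring] at h
    linear_combination h
  -- additivity of the diagonal (up to c) for nonzero arguments
  have hadd : ∀ a b : ℤ, a ≠ 0 → b ≠ 0 →
      f (a + b, -(a + b)) = f (a, -a) + f (b, -b) - c := by
    intro a b ha hb
    have E1 := hC a (-b)
    have E2 := hf a (-a) (-b)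
    simp only [show a + (-a) = (0 : ℤ) by ring, show (-a) + (-b) = -(a + b) by ring,
      h0t] at E2
    have E3 := hC a (-(a + b))
    simp only [show (-(-b)) = b by ring, show (-(-(a + b))) = a + b by ring] at E1 E3
    push_cast at E1 E2 E3
    have hma : (a : ℂ) ≠ 0 := Int.cast_ne_zero.mpr ha
    have key : (a : ℂ) * f (a + b, -(a + b)) = a * (f (a, -a) + f (b, -b) - c) := by
      linear_combination E1 - E2 - E3
    exact mul_left_cancel₀ hma key
  set d : ℂ := f (1, -1) - c with hd
  have hneg1 : f (-1, 1) = 2 * c - f (1, -1) := by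
    have h1 := hadd 1 (-1) one_ne_zero (by norm_num)
    simp only [show (1 : ℤ) + (-1) = 0 by ring, neg_zero, neg_neg, ← hc] at h1
    linear_combination -h1
  -- linearity of diagonal
  have hlin : ∀ m : ℤ, f (m, -m) = d * m + c := by
    intro m
    induction m using Int.induction_on with
    | zero => simp [hc]
    | succ i ih =>
      rcases eq_or_ne (i : ℤ) 0 with h0 | h0
      · rw [h0]; norm_num [hd]
      · have := hadd i 1 h0 one_ne_zero
        rw [this, ih]
        push_cast
        ring
    | pred i ih =>
      rcases eq_or_ne (i : ℤ) 0 with h0 | h0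
      · rw [h0]
        simp only [zero_sub, show -(-1 : ℤ) = 1 by ring, hd]
        push_cast
        linear_combination hneg1
      · have h2 := hadd (-i) (-1) (neg_ne_zero.mpr h0) (by norm_num)
        simp only [show (-(i : ℤ)) + (-1) = -i - 1 by ring, neg_neg] at h2 ih
        rw [h2, ih, hneg1, hd]
        push_cast
        ring
  refine ⟨d, ?_, ?_⟩
  · intro m n hmn
    have h := hC m n
    have hl := hlin (-n)
    simp only [neg_neg] at hl
    rw [hlin m, hl] at h
    have hne : ((n : ℂ) + m) ≠ 0 := by
      have : ((m + n : ℤ) : ℂ) ≠ 0 := Int.cast_ne_zero.mpr hmn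
      push_cast at this
      intro hcon; apply this; linear_combination hcon
    have h' : ((n : ℂ) + m) * f (m, n) = ((n : ℂ) + m) * c := by
      rw [h]; push_cast; ring
    exact mul_left_cancel₀ hne h'
  · exact hlin
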